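/- Let ℋ be a continuous function on an open set O ⊆ ℝ³ and let ψ: ℝ × (−R,R) → O ⊆ ℝ³ be a C² map satisfying ψ_uu + ψ_vv = 2 ℋ(ψ) ψ_u ×_L ψ_v on ℝ × (−R,R), with ψ(u,0) = 0 for all u ∈ ℝ and with null initial velocity: ⟨∂_vψ(u,0), ∂_vψ(u,0)⟩_L = 0 for all u ∈ ℝ. Then ψ satisfies the conformality conditions ⟨ψ_u,ψ_u⟩_L = ⟨ψ_v,ψ_v⟩_L and ⟨ψ_u,ψ_v⟩_L = 0 at every point of ℝ × (−R,R). -/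

import Mathlib

noncomputable section

open Real Set Metric Filter MeasureTheory

/-- Points of Minkowski 3-space, as nested pairs. -/
abbrev R3 : Type := ℝ × ℝ × ℝ

/-- The Lorentzian inner product `⟨a,b⟩_L = a₁b₁ + a₂b₂ − a₃b₃` of Minkowski 3-space. -/
def lor (a b : R3) : ℝ := a.1 * b.1 + a.2.1 * b.2.1 - a.2.2 * b.2.2

/-- The Lorentzian cross product
`a ×_L b = (a₃b₂ − a₂b₃, a₁b₃ − a₃b₁, a₁b₂ − a₂b₁)`. -/
def lcross (a b : R3) : R3 :=
  (a.2.2 * b.2.1 - a.2.1 * b.2.2, a.1 * b.2.2 - a.2.2 * b.1, a.1 * b.2.1 - a.2.1 * b.1)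

/-- Partial derivative with respect to the first variable. -/
def pd1 {E : Type*} [NormedAddCommGroup E] [NormedSpace ℝ E]
    (f : ℝ × ℝ → E) (p : ℝ × ℝ) : E := fderiv ℝ f p (1, 0)

/-- Partial derivative with respect to the second variable. -/
def pd2 {E : Type*} [NormedAddCommGroup E] [NormedSpace ℝ E]
    (f : ℝ × ℝ → E) (p : ℝ × ℝ) : E := fderiv ℝ f p (0, 1)

def zx (z : ℝ × ℝ → ℝ) : ℝ × ℝ → ℝ := pd1 z
def zy (z : ℝ × ℝ → ℝ) : ℝ × ℝ → ℝ := pd2 z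
def zxx (z : ℝ × ℝ → ℝ) : ℝ × ℝ → ℝ := pd1 (zx z)
def zxy (z : ℝ × ℝ → ℝ) : ℝ × ℝ → ℝ := pd2 (zx z)
def zyy (z : ℝ × ℝ → ℝ) : ℝ × ℝ → ℝ := pd2 (zy z)

/-- Hessian determinant `z_xx z_yy − z_xy²`. -/
def hessDet (z : ℝ × ℝ → ℝ) (p : ℝ × ℝ) : ℝ := zxx z p * zyy z p - (zxy z p) ^ 2

/-- The punctured disk `{(x,y) : 0 < (x−x₀)² + (y−y₀)² < ρ²}`. -/
def PDisk (x₀ y₀ ρ : ℝ) : Set (ℝ × ℝ) :=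
  {p | 0 < (p.1 - x₀) ^ 2 + (p.2 - y₀) ^ 2 ∧ (p.1 - x₀) ^ 2 + (p.2 - y₀) ^ 2 < ρ ^ 2}

/-- `z` is an elliptic solution of the prescribed mean curvature equation for `H` on `U`,
with graph contained in `O`. -/
def IsEllSol (H : R3 → ℝ) (O : Set R3) (U : Set (ℝ × ℝ)) (z : ℝ × ℝ → ℝ) : Prop :=
  ContDiffOn ℝ 2 z U ∧
  (∀ p ∈ U, ((p.1, p.2, z p) : R3) ∈ O) ∧
  (∀ p ∈ U, (zx z p) ^ 2 + (zy z p) ^ 2 < 1) ∧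
  (∀ p ∈ U,
    (1 - (zy z p) ^ 2) * zxx z p + 2 * zx z p * zy z p * zxy z p
        + (1 - (zx z p) ^ 2) * zyy z p
      = 2 * H (p.1, p.2, z p) * (1 - (zx z p) ^ 2 - (zy z p) ^ 2) ^ ((3 : ℝ) / 2))

/-- The isolated singularity of `z` at `(x₀,y₀)` is removable: some `C²` function on a full
disk centered at `(x₀,y₀)` agrees with `z` on a punctured neighborhood. -/
def RemovableSing (x₀ y₀ : ℝ) (z : ℝ × ℝ → ℝ) : Prop :=
  ∃ ε > 0, ∃ Z : ℝ × ℝ → ℝ,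
    ContDiffOn ℝ 2 Z (ball ((x₀, y₀) : ℝ × ℝ) ε) ∧
    ∀ p ∈ ball ((x₀, y₀) : ℝ × ℝ) ε, p ≠ (x₀, y₀) → Z p = z p

/-- `H` is of class `C^{k,α}` on `O`: it is `C^k` and its `k`-th derivative is locally
`α`-Hölder on `O`. -/
def IsCkalpha (k : ℕ) (α : NNReal) (H : R3 → ℝ) (O : Set R3) : Prop :=
  ContDiffOn ℝ k H O ∧
  ∀ p ∈ O, ∃ ε > 0, ∃ C : NNReal,
    HolderOnWith C α (iteratedFDeriv ℝ k H) (ball p ε ∩ O)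

/-- The open strip `ℝ × (0,R)`. -/
def Strip (R : ℝ) : Set (ℝ × ℝ) := {p | 0 < p.2 ∧ p.2 < R}

/-- The open strip `ℝ × (−R,R)`. -/
def Strip2 (R : ℝ) : Set (ℝ × ℝ) := {p | -R < p.2 ∧ p.2 < R}

/-- The half-open strip `ℝ × [0,R)`. -/
def StripCl (R : ℝ) : Set (ℝ × ℝ) := {p | 0 ≤ p.2 ∧ p.2 < R}

/-- First two components of `ψ`: the planar projection `Π = (ψ₁, ψ₂)`. -/
def Pi2 (ψ : ℝ × ℝ → R3) (p : ℝ × ℝ) : ℝ × ℝ := ((ψ p).1, (ψ p).2.1)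

def comp1 (ψ : ℝ × ℝ → R3) : ℝ × ℝ → ℝ := fun p => (ψ p).1
def comp2 (ψ : ℝ × ℝ → R3) : ℝ × ℝ → ℝ := fun p => (ψ p).2.1
def comp3 (ψ : ℝ × ℝ → R3) : ℝ × ℝ → ℝ := fun p => (ψ p).2.2

/-- `ψ : ℝ × (0,R) → ℝ³` is a conformal parametrization of the graph of `z` near the
singularity `(x₀,y₀)`: it is 2π-periodic in `u`, its planar projection induces a
diffeomorphism with positive Jacobian from `(ℝ/2πℤ) × (0,R)` onto a punctured
neighborhood `W ⊆ Ω` of `(x₀,y₀)`, its third component is `z` of the first two, and the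
conformality conditions hold. -/
def IsConfParam (z : ℝ × ℝ → ℝ) (Ω : Set (ℝ × ℝ)) (x₀ y₀ R : ℝ)
    (ψ : ℝ × ℝ → R3) : Prop :=
  0 < R ∧
  ContDiffOn ℝ 1 ψ (Strip R) ∧
  (∀ u v : ℝ, ψ (u + 2 * π, v) = ψ (u, v)) ∧
  (∃ W : Set (ℝ × ℝ), W ⊆ Ω ∧ ((x₀, y₀) : ℝ × ℝ) ∉ W ∧
      insert ((x₀, y₀) : ℝ × ℝ) W ∈ nhds ((x₀, y₀) : ℝ × ℝ) ∧
      Pi2 ψ '' Strip R = W) ∧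
  (∀ p ∈ Strip R, ∀ q ∈ Strip R, Pi2 ψ p = Pi2 ψ q →
      p.2 = q.2 ∧ ∃ n : ℤ, p.1 - q.1 = 2 * π * n) ∧
  (∀ p ∈ Strip R,
      0 < pd1 (comp1 ψ) p * pd2 (comp2 ψ) p - pd2 (comp1 ψ) p * pd1 (comp2 ψ) p) ∧
  (∀ p ∈ Strip R, comp3 ψ p = z (Pi2 ψ p)) ∧
  (∀ p ∈ Strip R,
      lor (pd1 ψ p) (pd1 ψ p) = lor (pd2 ψ p) (pd2 ψ p) ∧
      0 < lor (pd1 ψ p) (pd1 ψ p) ∧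
      lor (pd1 ψ p) (pd2 ψ p) = 0)

/-- `ψ` extends real-analytically across `v = 0`, with `ψ(u,0) = p₀` and
`∂_vψ(u,0) = A(u)(cos u, −sin u, 1)`. -/
def ExtAnal (ψ : ℝ × ℝ → R3) (R : ℝ) (p₀ : R3) (A : ℝ → ℝ) : Prop :=
  ∃ ε > 0, ∃ Ψ : ℝ × ℝ → R3,
    AnalyticOnNhd ℝ Ψ {p : ℝ × ℝ | -ε < p.2 ∧ p.2 < R} ∧
    (∀ p ∈ Strip R, Ψ p = ψ p) ∧
    (∀ u : ℝ, Ψ (u, 0) = p₀) ∧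
    (∀ u : ℝ, pd2 Ψ (u, 0) = (A u * Real.cos u, -(A u * Real.sin u), A u))

/-- The class `𝒜₂` of 2π-periodic, real-analytic, nowhere vanishing functions. -/
def MemA2 (A : ℝ → ℝ) : Prop :=
  AnalyticOnNhd ℝ A univ ∧ (∀ u : ℝ, A (u + 2 * π) = A u) ∧ ∀ u : ℝ, A u ≠ 0

/-- The class `𝒜₁`: elliptic solutions on a punctured disk of radius `ρ` centered at
`(x₀,y₀)`, extending continuously with value `z₀`, whose Hessian determinant is
nonvanishing on a punctured neighborhood of `(x₀,y₀)`. -/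
def MemA1 (H : R3 → ℝ) (O : Set R3) (x₀ y₀ z₀ ρ : ℝ) (z : ℝ × ℝ → ℝ) : Prop :=
  0 < ρ ∧ IsEllSol H O (PDisk x₀ y₀ ρ) z ∧
  Tendsto z (nhdsWithin ((x₀, y₀) : ℝ × ℝ) (PDisk x₀ y₀ ρ)) (nhds z₀) ∧
  ∃ ε : ℝ, 0 < ε ∧ ε ≤ ρ ∧ ∀ p ∈ PDisk x₀ y₀ ε, hessDet z p ≠ 0

/-- `z` corresponds to `A`: some conformal parametrization of the graph of `z` near the
singularity extends real-analytically across `v = 0` with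
`∂_vψ(u,0) = A(u)(cos u, −sin u, 1)`. -/
def Corr (z : ℝ × ℝ → ℝ) (x₀ y₀ z₀ ρ : ℝ) (A : ℝ → ℝ) : Prop :=
  ∃ R : ℝ, ∃ ψ : ℝ × ℝ → R3,
    IsConfParam z (PDisk x₀ y₀ ρ) x₀ y₀ R ψ ∧ ExtAnal ψ R ((x₀, y₀, z₀) : R3) A

/-- The induced (first fundamental form) metric of the graph of `z`,
`ds² = (1−z_x²)dx² − 2 z_x z_y dx dy + (1−z_y²)dy²`, as a bilinear form. -/
def dsq (z : ℝ × ℝ → ℝ) (p : ℝ × ℝ) (ξ η : ℝ × ℝ) : ℝ :=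
  (1 - (zx z p) ^ 2) * ξ.1 * η.1 - zx z p * zy z p * (ξ.1 * η.2 + ξ.2 * η.1)
    + (1 - (zy z p) ^ 2) * ξ.2 * η.2

/-- `(Ω, ds²)` is conformally equivalent to the planar domain `D`: there is a `C¹`
diffeomorphism `Φ : Ω → D` and a positive function `λ` with
`⟨DΦ(ξ), DΦ(η)⟩_euc = λ · ds²(ξ,η)`. -/
def ConfEquiv (z : ℝ × ℝ → ℝ) (Ω D : Set (ℝ × ℝ)) : Prop :=
  ∃ (Φ : ℝ × ℝ → ℝ × ℝ) (Φinv : ℝ × ℝ → ℝ × ℝ) (lam : ℝ × ℝ → ℝ),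
    ContDiffOn ℝ 1 Φ Ω ∧ ContDiffOn ℝ 1 Φinv D ∧
    (∀ p ∈ Ω, Φ p ∈ D ∧ Φinv (Φ p) = p) ∧
    (∀ q ∈ D, Φinv q ∈ Ω ∧ Φ (Φinv q) = q) ∧
    (∀ p ∈ Ω, 0 < lam p ∧
      ∀ ξ η : ℝ × ℝ, (fderiv ℝ Φ p ξ).1 * (fderiv ℝ Φ p η).1
          + (fderiv ℝ Φ p ξ).2 * (fderiv ℝ Φ p η).2 = lam p * dsq z p ξ η)


section Stmt7Aux

lemma lor_add_left' (a b c : R3) : lor (a + b) c = lor a c + lor b c := by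
  simp [lor]; ring
lemma lor_smul_left' (r : ℝ) (a b : R3) : lor (r • a) b = r * lor a b := by
  simp [lor]; ring
lemma lor_comm' (a b : R3) : lor a b = lor b a := by simp [lor]; ring
lemma lor_lcross_left' (a b : R3) : lor (lcross a b) a = 0 := by simp [lor, lcross]; ring
lemma lor_lcross_right' (a b : R3) : lor (lcross a b) b = 0 := by simp [lor, lcross]; ring
lemma lor_zero_left' (b : R3) : lor 0 b = 0 := by simp [lor]

lemma exists_hasFDerivAt_lor {U V : ℝ × ℝ → R3} {U' V' : (ℝ × ℝ) →L[ℝ] R3} {p : ℝ × ℝ}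
    (hU : HasFDerivAt U U' p) (hV : HasFDerivAt V V' p) :
    ∃ L : (ℝ × ℝ) →L[ℝ] ℝ, HasFDerivAt (fun q => lor (U q) (V q)) L p ∧
      ∀ w, L w = lor (U' w) (V p) + lor (U p) (V' w) := by
  set π1 : R3 →L[ℝ] ℝ := ContinuousLinearMap.fst ℝ ℝ (ℝ × ℝ) with hπ1
  set π2 : R3 →L[ℝ] ℝ :=
    (ContinuousLinearMap.fst ℝ ℝ ℝ).comp (ContinuousLinearMap.snd ℝ ℝ (ℝ × ℝ)) with hπ2
  set π3 : R3 →L[ℝ] ℝ :=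
    (ContinuousLinearMap.snd ℝ ℝ ℝ).comp (ContinuousLinearMap.snd ℝ ℝ (ℝ × ℝ)) with hπ3
  have hU1 : HasFDerivAt (fun q => (U q).1) (π1.comp U') p := (π1.hasFDerivAt).comp p hU
  have hV1 : HasFDerivAt (fun q => (V q).1) (π1.comp V') p := (π1.hasFDerivAt).comp p hV
  have hU2 : HasFDerivAt (fun q => (U q).2.1) (π2.comp U') p := (π2.hasFDerivAt).comp p hU
  have hV2 : HasFDerivAt (fun q => (V q).2.1) (π2.comp V') p := (π2.hasFDerivAt).comp p hV
  have hU3 : HasFDerivAt (fun q => (U q).2.2) (π3.comp U') p := (π3.hasFDerivAt).comp p hU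
  have hV3 : HasFDerivAt (fun q => (V q).2.2) (π3.comp V') p := (π3.hasFDerivAt).comp p hV
  have h := ((hU1.mul hV1).add (hU2.mul hV2)).sub (hU3.mul hV3)
  refine ⟨(U p).1 • π1.comp V' + (V p).1 • π1.comp U' +
      ((U p).2.1 • π2.comp V' + (V p).2.1 • π2.comp U') -
      ((U p).2.2 • π3.comp V' + (V p).2.2 • π3.comp U'), ?_, ?_⟩
  · exact h
  · intro w
    simp [lor, hπ1, hπ2, hπ3]
    ring

end Stmt7Aux

/-- Claim 1 in Theorem `existence`: a `C²` solution of
`ψ_uu + ψ_vv = 2ℋ(ψ) ψ_u ×_L ψ_v` on `ℝ × (−R,R)` with `ψ(u,0) = 0` and null initial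
velocity satisfies the conformality conditions everywhere. -/
theorem stmt7 (O : Set R3) (R : ℝ) (H : R3 → ℝ) (ψ : ℝ × ℝ → R3)
    (hR : 0 < R) (hO : IsOpen O) (hH : ContinuousOn H O)
    (hψO : ∀ p ∈ Strip2 R, ψ p ∈ O)
    (hψ : ContDiffOn ℝ 2 ψ (Strip2 R))
    (hsys : ∀ p ∈ Strip2 R,
      pd1 (pd1 ψ) p + pd2 (pd2 ψ) p = (2 * H (ψ p)) • lcross (pd1 ψ p) (pd2 ψ p))
    (h0 : ∀ u : ℝ, ψ (u, 0) = (0 : R3))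
    (hnull : ∀ u : ℝ, lor (pd2 ψ (u, 0)) (pd2 ψ (u, 0)) = 0) :
    ∀ p ∈ Strip2 R,
      lor (pd1 ψ p) (pd1 ψ p) = lor (pd2 ψ p) (pd2 ψ p) ∧
      lor (pd1 ψ p) (pd2 ψ p) = 0 := by
  classical
  -- the strip is open
  have hS : IsOpen (Strip2 R) := by
    have : Strip2 R = (fun p : ℝ × ℝ => p.2) ⁻¹' (Set.Ioo (-R) R) := rfl
    rw [this]; exact isOpen_Ioo.preimage continuous_snd
  -- basic differentiability facts
  have hψdiff : ∀ q ∈ Strip2 R, HasFDerivAt ψ (fderiv ℝ ψ q) q := fun q hq =>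
    ((hψ.contDiffAt (hS.mem_nhds hq)).differentiableAt (by norm_num)).hasFDerivAt
  have h2nd : ∀ q ∈ Strip2 R, HasFDerivAt (fderiv ℝ ψ) (fderiv ℝ (fderiv ℝ ψ) q) q := fun q hq =>
    (((hψ.contDiffAt (hS.mem_nhds hq)).fderiv_right (m := 1) (by norm_num)).differentiableAt
      one_ne_zero).hasFDerivAt
  have hsymm : ∀ q ∈ Strip2 R, ∀ v w : ℝ × ℝ,
      fderiv ℝ (fderiv ℝ ψ) q v w = fderiv ℝ (fderiv ℝ ψ) q w v := by
    intro q hq v w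
    refine second_derivative_symmetric_of_eventually (f := ψ) ?_ (h2nd q hq) v w
    filter_upwards [hS.mem_nhds hq] with y hy using hψdiff y hy
  have hpd1 : ∀ q ∈ Strip2 R, HasFDerivAt (pd1 ψ)
      ((ContinuousLinearMap.apply ℝ R3 (((1:ℝ),(0:ℝ)) : ℝ × ℝ)).comp
        (fderiv ℝ (fderiv ℝ ψ) q)) q := fun q hq =>
    (ContinuousLinearMap.apply ℝ R3 (((1:ℝ),(0:ℝ)) : ℝ × ℝ)).hasFDerivAt.comp q (h2nd q hq)
  have hpd2 : ∀ q ∈ Strip2 R, HasFDerivAt (pd2 ψ)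
      ((ContinuousLinearMap.apply ℝ R3 (((0:ℝ),(1:ℝ)) : ℝ × ℝ)).comp
        (fderiv ℝ (fderiv ℝ ψ) q)) q := fun q hq =>
    (ContinuousLinearMap.apply ℝ R3 (((0:ℝ),(1:ℝ)) : ℝ × ℝ)).hasFDerivAt.comp q (h2nd q hq)
  set EE : ℝ × ℝ → ℝ := fun q => lor (pd1 ψ q) (pd1 ψ q) - lor (pd2 ψ q) (pd2 ψ q) with hEE
  set FF : ℝ × ℝ → ℝ := fun q => lor (pd1 ψ q) (pd2 ψ q) with hFF
  -- Cauchy-Riemann package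
  have key : ∀ p ∈ Strip2 R, ∃ LE LF : (ℝ × ℝ) →L[ℝ] ℝ,
      HasFDerivAt EE LE p ∧ HasFDerivAt FF LF p ∧
      LE ((0:ℝ),(1:ℝ)) = 2 * LF ((1:ℝ),(0:ℝ)) ∧
      LE ((1:ℝ),(0:ℝ)) = -(2 * LF ((0:ℝ),(1:ℝ))) := by
    intro p hp
    obtain ⟨L1, hL1, hL1v⟩ := exists_hasFDerivAt_lor (hpd1 p hp) (hpd1 p hp)
    obtain ⟨L2, hL2, hL2v⟩ := exists_hasFDerivAt_lor (hpd2 p hp) (hpd2 p hp)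
    obtain ⟨LF, hLF, hLFv⟩ := exists_hasFDerivAt_lor (hpd1 p hp) (hpd2 p hp)
    simp only [ContinuousLinearMap.comp_apply, ContinuousLinearMap.apply_apply] at hL1v hL2v hLFv
    set D2 := fderiv ℝ (fderiv ℝ ψ) p with hD2
    set a := pd1 ψ p with hadef
    set b := pd2 ψ p with hbdef
    have e1 : pd1 (pd1 ψ) p = D2 ((1:ℝ),(0:ℝ)) ((1:ℝ),(0:ℝ)) := by
      show fderiv ℝ (pd1 ψ) p ((1:ℝ),(0:ℝ)) = _
      rw [(hpd1 p hp).fderiv]; rfl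
    have e2 : pd2 (pd2 ψ) p = D2 ((0:ℝ),(1:ℝ)) ((0:ℝ),(1:ℝ)) := by
      show fderiv ℝ (pd2 ψ) p ((0:ℝ),(1:ℝ)) = _
      rw [(hpd2 p hp).fderiv]; rfl
    have hPDE : D2 ((1:ℝ),(0:ℝ)) ((1:ℝ),(0:ℝ)) + D2 ((0:ℝ),(1:ℝ)) ((0:ℝ),(1:ℝ))
        = (2 * H (ψ p)) • lcross a b := by
      rw [← e1, ← e2]; exact hsys p hp
    have hb : lor (D2 ((1:ℝ),(0:ℝ)) ((1:ℝ),(0:ℝ))) b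
        + lor (D2 ((0:ℝ),(1:ℝ)) ((0:ℝ),(1:ℝ))) b = 0 := by
      rw [← lor_add_left', hPDE, lor_smul_left', lor_lcross_right', mul_zero]
    have ha : lor (D2 ((1:ℝ),(0:ℝ)) ((1:ℝ),(0:ℝ))) a
        + lor (D2 ((0:ℝ),(1:ℝ)) ((0:ℝ),(1:ℝ))) a = 0 := by
      rw [← lor_add_left', hPDE, lor_smul_left', lor_lcross_left', mul_zero]
    have hs : D2 ((1:ℝ),(0:ℝ)) ((0:ℝ),(1:ℝ)) = D2 ((0:ℝ),(1:ℝ)) ((1:ℝ),(0:ℝ)) :=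
      hsymm p hp _ _
    refine ⟨L1 - L2, LF, hL1.sub hL2, hLF, ?_, ?_⟩
    · have v1 := hL1v ((0:ℝ),(1:ℝ))
      have v2 := hL2v ((0:ℝ),(1:ℝ))
      have vf := hLFv ((1:ℝ),(0:ℝ))
      rw [hs] at vf
      simp only [ContinuousLinearMap.sub_apply, v1, v2, vf]
      linarith [lor_comm' a (D2 ((0:ℝ),(1:ℝ)) ((1:ℝ),(0:ℝ))),
        lor_comm' b (D2 ((0:ℝ),(1:ℝ)) ((0:ℝ),(1:ℝ))), hb]
    · have v1 := hL1v ((1:ℝ),(0:ℝ))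
      have v2 := hL2v ((1:ℝ),(0:ℝ))
      have vf := hLFv ((0:ℝ),(1:ℝ))
      rw [hs] at v2
      simp only [ContinuousLinearMap.sub_apply, v1, v2, vf]
      linarith [lor_comm' a (D2 ((1:ℝ),(0:ℝ)) ((1:ℝ),(0:ℝ))),
        lor_comm' b (D2 ((0:ℝ),(1:ℝ)) ((1:ℝ),(0:ℝ))),
        lor_comm' a (D2 ((0:ℝ),(1:ℝ)) ((0:ℝ),(1:ℝ))), ha]
  -- the holomorphic function f = E - 2iF
  set f : ℂ → ℂ := fun z => ((EE (z.re, z.im) : ℝ) : ℂ)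
      - (2 * Complex.I) * ((FF (z.re, z.im) : ℝ) : ℂ) with hfdef
  set Sc : Set ℂ := {z : ℂ | -R < z.im ∧ z.im < R} with hScdef
  have hmemS : ∀ z : ℂ, z ∈ Sc → ((z.re, z.im) : ℝ × ℝ) ∈ Strip2 R := fun z hz => hz
  have hdiff : ∀ z ∈ Sc, DifferentiableAt ℂ f z := by
    intro z hz
    obtain ⟨LE, LF, hLE, hLF, key1, key2⟩ := key (z.re, z.im) (hmemS z hz)
    set eC : ℂ →L[ℝ] ℝ × ℝ := Complex.equivRealProdCLM.toContinuousLinearMap with heC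
    have he : HasFDerivAt (fun z : ℂ => ((z.re, z.im) : ℝ × ℝ)) eC z :=
      Complex.equivRealProdCLM.hasFDerivAt
    have hEc : HasFDerivAt (fun z : ℂ => ((EE (z.re, z.im) : ℝ) : ℂ))
        (Complex.ofRealCLM.comp (LE.comp eC)) z :=
      by have := Complex.ofRealCLM.hasFDerivAt.comp z (hLE.comp z he); exact this
    have hFc : HasFDerivAt (fun z : ℂ => ((FF (z.re, z.im) : ℝ) : ℂ))
        (Complex.ofRealCLM.comp (LF.comp eC)) z :=
      by have := Complex.ofRealCLM.hasFDerivAt.comp z (hLF.comp z he); exact this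
    have hfd : HasFDerivAt f
        (Complex.ofRealCLM.comp (LE.comp eC)
          - (2 * Complex.I) • (Complex.ofRealCLM.comp (LF.comp eC))) z :=
      hEc.sub (hFc.const_mul (2 * Complex.I))
    set c : ℂ := ((LE (((1:ℝ),(0:ℝ))) : ℝ) : ℂ)
        - (2 * Complex.I) * ((LF (((1:ℝ),(0:ℝ))) : ℝ) : ℂ) with hcdef
    have hlin : ∀ w : ℂ,
        (Complex.ofRealCLM.comp (LE.comp eC)
          - (2 * Complex.I) • (Complex.ofRealCLM.comp (LF.comp eC))) w = c * w := by
      intro w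
      have hw : (eC w : ℝ × ℝ) = w.re • (((1:ℝ),(0:ℝ)) : ℝ × ℝ)
          + w.im • (((0:ℝ),(1:ℝ)) : ℝ × ℝ) := by
        simp [heC, Prod.ext_iff, Complex.equivRealProdCLM_apply]
      simp only [ContinuousLinearMap.sub_apply, ContinuousLinearMap.smul_apply,
        ContinuousLinearMap.comp_apply, hw, map_add, _root_.map_smul, smul_eq_mul,
        Complex.ofRealCLM_apply]
      apply Complex.ext <;>
        simp [hcdef, key1, key2, Complex.ext_iff, Complex.mul_re, Complex.mul_im] <;> ring
    have hder : HasDerivAt f c z := by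
      rw [hasDerivAt_iff_isLittleO_nhds_zero]
      have h' := hasFDerivAt_iff_isLittleO_nhds_zero.mp hfd
      refine h'.congr' (Filter.Eventually.of_forall fun h => ?_) Filter.EventuallyEq.rfl
      simp only [hlin, smul_eq_mul]
      ring
    exact hder.differentiableAt
  have hopen : IsOpen Sc := by
    have : Sc = Complex.im ⁻¹' (Set.Ioo (-R) R) := rfl
    rw [this]; exact isOpen_Ioo.preimage Complex.continuous_im
  have hconv : Convex ℝ Sc := by
    have : Sc = Complex.imLm ⁻¹' (Set.Ioo (-R) R) := rfl
    rw [this]; exact (convex_Ioo _ _).linear_preimage Complex.imLm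
  have hanal : AnalyticOnNhd ℂ f Sc :=
    DifferentiableOn.analyticOnNhd (fun z hz => (hdiff z hz).differentiableWithinAt) hopen
  -- f vanishes on the real axis
  have hax : ∀ t : ℝ, pd1 ψ (t, 0) = 0 := by
    intro t
    have hmem : ((t, (0:ℝ)) : ℝ × ℝ) ∈ Strip2 R := by
      constructor <;> simp [Strip2] <;> linarith
    have hcurve : HasDerivAt (fun s : ℝ => ((s, (0:ℝ)) : ℝ × ℝ)) (((1:ℝ),(0:ℝ)) : ℝ × ℝ) t :=
      (hasDerivAt_id t).prodMk (hasDerivAt_const t (0:ℝ))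
    have h1 : HasDerivAt (fun s : ℝ => ψ (s, 0)) (fderiv ℝ ψ (t,0) (((1:ℝ),(0:ℝ)) : ℝ × ℝ)) t :=
      (hψdiff (t,0) hmem).comp_hasDerivAt t hcurve
    have h2 : HasDerivAt (fun s : ℝ => ψ (s, 0)) 0 t := by
      have heq : (fun s : ℝ => ψ (s, 0)) = fun _ => (0:R3) := funext h0
      rw [heq]; exact hasDerivAt_const t (0:R3)
    exact h1.unique h2
  have hfax : ∀ t : ℝ, f ((t : ℝ) : ℂ) = 0 := by
    intro t
    have h1 : EE (t, 0) = 0 := by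
      rw [hEE]; simp only [hax t, lor_zero_left', hnull t]; ring
    have h2 : FF (t, 0) = 0 := by
      rw [hFF]; simp only [hax t, lor_zero_left']
    simp [hfdef, h1, h2]
  have h0mem : (0:ℂ) ∈ Sc := by
    constructor <;> simp [Complex.zero_im] <;> linarith
  have hfreq : ∃ᶠ z in nhdsWithin (0:ℂ) {(0:ℂ)}ᶜ, f z = 0 := by
    have htend : Filter.Tendsto (fun t : ℝ => (t : ℂ))
        (nhdsWithin (0:ℝ) {(0:ℝ)}ᶜ) (nhdsWithin (0:ℂ) {(0:ℂ)}ᶜ) := by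
      apply tendsto_nhdsWithin_of_tendsto_nhds_of_eventually_within
      · have := Complex.continuous_ofReal.tendsto (0:ℝ)
        simpa using this.mono_left nhdsWithin_le_nhds
      · exact eventually_mem_nhdsWithin.mono (fun t ht => by simpa using ht)
    exact htend.frequently (Filter.Eventually.of_forall fun t => hfax t).frequently
  have hEqOn := hanal.eqOn_zero_of_preconnected_of_frequently_eq_zero
    hconv.isPreconnected h0mem hfreq
  intro p hp
  have hzmem : (⟨p.1, p.2⟩ : ℂ) ∈ Sc := hp
  have hz := hEqOn hzmem
  have hz' : ((EE p : ℝ) : ℂ) - (2 * Complex.I) * ((FF p : ℝ) : ℂ) = 0 := by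
    simpa [hfdef] using hz
  rw [Complex.ext_iff] at hz'
  simp [Complex.mul_re, Complex.mul_im] at hz'
  obtain ⟨hre, him⟩ := hz'
  have hEp : EE p = 0 := by linarith
  have hFp : FF p = 0 := by linarith
  simp only [hEE] at hEp
  simp only [hFF] at hFp
  exact ⟨by linarith, hFp⟩
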